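/- If S is a Gallai-Edmonds set of a finite graph G, then S equals the set of vertices outside D(G) having a neighbor in D(G), where D(G) is the set of vertices missed by some maximum matching. Consequently, the Gallai-Edmonds set of G is unique. -/

import Mathlib

open SimpleGraph Set

variable {V : Type*} [Fintype V] [DecidableEq V]

/-- The vertex set (in `V`) of a connected component of the graph induced on `B`. -/
def compSupp (G : SimpleGraph V) (B : Set V)
    (c : (G.induce B).ConnectedComponent) : Set V :=
  Subtype.val '' c.supp

/-- `A` is (the vertex set of) a connected component of `G` restricted to `B`. -/
def IsCompOf (G : SimpleGraph V) (B : Set V) (A : Set V) : Prop :=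
  ∃ c : (G.induce B).ConnectedComponent, A = compSupp G B c

/-- The number of odd connected components of `G` restricted to `B`. -/
noncomputable def oddComps (G : SimpleGraph V) (B : Set V) : ℕ :=
  Set.ncard {c : (G.induce B).ConnectedComponent | Odd (compSupp G B c).ncard}

/-- The deficiency `df(S) = od(S) - |S|`. -/
noncomputable def df (G : SimpleGraph V) (S : Set V) : ℤ :=
  (oddComps G Sᶜ : ℤ) - S.ncard

/-- The induced subgraph on `A` has a perfect matching. -/
def HasPM (G : SimpleGraph V) (A : Set V) : Prop :=
  ∃ M : Subgraph (G.induce A), M.IsPerfectMatching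

/-- `Df(S)`: total number of vertices in components of `G - S` with no perfect matching. -/
noncomputable def Df (G : SimpleGraph V) (S : Set V) : ℕ :=
  Set.ncard (⋃ c ∈ {c : (G.induce Sᶜ).ConnectedComponent |
    ¬ HasPM G (compSupp G Sᶜ c)}, compSupp G Sᶜ c)

/-- The set of `M`-exposed vertices. -/
def exposed (G : SimpleGraph V) (M : Subgraph G) : Set V :=
  {v | v ∉ M.support}

/-- `A` induces a factor-critical graph. -/
def FactorCritical (G : SimpleGraph V) (A : Set V) : Prop :=
  ∀ v ∈ A, HasPM G (A \ {v})

/-- The neighborhood of `T ⊆ S` in the bipartite minor `⟨G,S⟩`: the odd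
`S`-components adjacent to some vertex of `T`. -/
def minorNbhd (G : SimpleGraph V) (S T : Set V) :
    Set (G.induce Sᶜ).ConnectedComponent :=
  {c | Odd (compSupp G Sᶜ c).ncard ∧ ∃ u ∈ T, ∃ w ∈ compSupp G Sᶜ c, G.Adj u w}

/-- `S` is a Gallai-Edmonds set of `G`. -/
def GallaiEdmonds (G : SimpleGraph V) (S : Set V) : Prop :=
  (∀ c : (G.induce Sᶜ).ConnectedComponent,
      Even (compSupp G Sᶜ c).ncard → HasPM G (compSupp G Sᶜ c)) ∧
  (∀ c : (G.induce Sᶜ).ConnectedComponent,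
      Odd (compSupp G Sᶜ c).ncard → FactorCritical G (compSupp G Sᶜ c)) ∧
  (∀ T ⊆ S, T.Nonempty → T.ncard + 1 ≤ (minorNbhd G S T).ncard)

/-- `w` and `w'` lie in the same `S`-component. -/
def SameComp (G : SimpleGraph V) (S : Set V) (w w' : V) : Prop :=
  ∃ c : (G.induce Sᶜ).ConnectedComponent,
    w ∈ compSupp G Sᶜ c ∧ w' ∈ compSupp G Sᶜ c

/-- `M` is a maximum matching of `G`. -/
def IsMaximumMatching (G : SimpleGraph V) (M : Subgraph G) : Prop :=
  M.IsMatching ∧ ∀ M' : Subgraph G, M'.IsMatching →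
    M'.edgeSet.ncard ≤ M.edgeSet.ncard
section Basics
set_option linter.unusedSectionVars false

variable {V : Type*} [Fintype V] [DecidableEq V] {G : SimpleGraph V} {B : Set V}

lemma mem_compSupp {c : (G.induce B).ConnectedComponent} {v : V} :
    v ∈ compSupp G B c ↔ ∃ hv : v ∈ B, (G.induce B).connectedComponentMk ⟨v, hv⟩ = c := by
  constructor
  · rintro ⟨⟨u, hu⟩, hc, rfl⟩
    exact ⟨hu, hc⟩
  · rintro ⟨hv, hc⟩
    exact ⟨⟨v, hv⟩, hc, rfl⟩

lemma compSupp_subset (c : (G.induce B).ConnectedComponent) : compSupp G B c ⊆ B := by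
  rintro v ⟨⟨u, hu⟩, _, rfl⟩; exact hu

lemma compSupp_disjoint {c d : (G.induce B).ConnectedComponent} (h : c ≠ d) :
    Disjoint (compSupp G B c) (compSupp G B d) := by
  rw [Set.disjoint_left]
  rintro v hc hd
  rw [mem_compSupp] at hc hd
  obtain ⟨hv, h1⟩ := hc
  obtain ⟨hv', h2⟩ := hd
  exact h ((h1.symm.trans (by rfl)).trans h2)

lemma compSupp_nonempty (c : (G.induce B).ConnectedComponent) : (compSupp G B c).Nonempty := by
  obtain ⟨v, rfl⟩ := c.exists_rep
  exact ⟨v, mem_compSupp.mpr ⟨v.2, rfl⟩⟩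

lemma mem_compSupp_self (v : V) (hv : v ∈ B) :
    v ∈ compSupp G B ((G.induce B).connectedComponentMk ⟨v, hv⟩) :=
  mem_compSupp.mpr ⟨hv, rfl⟩

lemma compSupp_pairwise_disjoint :
    Pairwise fun c d : (G.induce B).ConnectedComponent ↦
      Disjoint (compSupp G B c) (compSupp G B d) :=
  fun _ _ h => compSupp_disjoint h

/-- adjacent vertices of `B` lie in the same component -/
lemma adj_same_comp {v w : V} (hv : v ∈ B) (hw : w ∈ B) (h : G.Adj v w) :
    (G.induce B).connectedComponentMk ⟨v, hv⟩ = (G.induce B).connectedComponentMk ⟨w, hw⟩ :=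
  SimpleGraph.ConnectedComponent.sound (SimpleGraph.Adj.reachable (by exact h))

lemma mem_compSupp_of_adj {v w : V} {c : (G.induce B).ConnectedComponent}
    (hv : v ∈ compSupp G B c) (hw : w ∈ B) (h : G.Adj v w) : w ∈ compSupp G B c := by
  rw [mem_compSupp] at hv ⊢
  obtain ⟨hvB, rfl⟩ := hv
  exact ⟨hw, (adj_same_comp hvB hw h).symm⟩

end Basics
section MatchCount
set_option linter.unusedSectionVars false

variable {V : Type*} [Fintype V] [DecidableEq V] {G : SimpleGraph V}

lemma matching_ncard_verts {M : Subgraph G} (hM : M.IsMatching) :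
    M.verts.ncard = 2 * M.edgeSet.ncard := by
  classical
  haveI : Fintype M.verts := Fintype.ofFinite _
  haveI : DecidableRel M.coe.Adj := Classical.decRel _
  have h1 : ∑ v : M.verts, M.coe.degree v = 2 * M.coe.edgeFinset.card := by
    convert M.coe.sum_degrees_eq_twice_card_edges using 2 with v
    congr!
  have hdeg : ∀ v : M.verts, M.coe.degree v = 1 := by
    intro v
    rw [M.coe_degree, Subgraph.degree_eq_one_iff_existsUnique_adj]
    exact hM v.2
  rw [Finset.sum_congr rfl (fun v _ => hdeg v), Finset.sum_const, smul_eq_mul, mul_one,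
    Finset.card_univ] at h1
  have h2 : M.verts.ncard = Fintype.card M.verts := by
    rw [← Nat.card_coe_set_eq, Nat.card_eq_fintype_card]
  have h3 : M.coe.edgeFinset.card = M.edgeSet.ncard := by
    rw [← M.image_coe_edgeSet_coe,
      Set.ncard_image_of_injective _ (Sym2.map.injective Subtype.val_injective),
      ← Nat.card_coe_set_eq, Nat.card_eq_fintype_card, SimpleGraph.edgeFinset_card]
  rw [h2, h1, h3]

lemma exposed_eq_compl_verts {M : Subgraph G} (hM : M.IsMatching) :
    exposed G M = M.vertsᶜ := by
  ext v
  simp [exposed, hM.support_eq_verts]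

lemma two_mul_edges_add_exposed {M : Subgraph G} (hM : M.IsMatching) :
    2 * M.edgeSet.ncard + (exposed G M).ncard = Fintype.card V := by
  rw [exposed_eq_compl_verts hM, ← matching_ncard_verts hM,
    Set.ncard_add_ncard_compl, Nat.card_eq_fintype_card]

end MatchCount
section Counting
set_option linter.unusedSectionVars false
set_option maxHeartbeats 800000

variable {V : Type*} [Fintype V] [DecidableEq V] {G : SimpleGraph V} {S : Set V}

lemma compSupp_eq_of_mem {B : Set V} {c d : (G.induce B).ConnectedComponent} {v : V}
    (hc : v ∈ compSupp G B c) (hd : v ∈ compSupp G B d) : c = d := by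
  by_contra h
  exact (compSupp_disjoint h).ne_of_mem hc hd rfl

lemma odd_comp_matched_to_S {M : Subgraph G} (hM : M.IsMatching)
    {c : (G.induce Sᶜ).ConnectedComponent} (hodd : Odd (compSupp G Sᶜ c).ncard)
    (hexp : ∀ v ∈ compSupp G Sᶜ c, v ∉ exposed G M) :
    ∃ w ∈ compSupp G Sᶜ c, ∃ s ∈ S, M.Adj w s := by
  by_contra hcon
  push_neg at hcon
  set A := compSupp G Sᶜ c with hA
  have hmatch : (M.induce A).IsMatching := by
    intro v hv
    have hv' : v ∈ A := hv
    have hvsupp : v ∈ M.support := by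
      have := hexp v hv'
      simpa [exposed] using this
    have hvverts : v ∈ M.verts := M.support_subset_verts hvsupp
    obtain ⟨w, hw, hwu⟩ := hM hvverts
    have hwS : w ∉ S := fun hwS => hcon v hv' w hwS hw
    have hwA : w ∈ A := mem_compSupp_of_adj hv' hwS (M.adj_sub hw)
    refine ⟨w, ⟨hv', hwA, hw⟩, ?_⟩
    rintro y ⟨-, -, hy⟩
    exact hwu y hy
  have heven : Even A.ncard := by
    have h2 := matching_ncard_verts hmatch
    have h3 : (M.induce A).verts = A := rfl
    rw [h3] at h2
    exact ⟨(M.induce A).edgeSet.ncard, by omega⟩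
  exact (Nat.not_odd_iff_even.mpr heven) hodd

lemma counting_lower_bound {M : Subgraph G} (hM : M.IsMatching) :
    Set.ncard {c : (G.induce Sᶜ).ConnectedComponent | Odd (compSupp G Sᶜ c).ncard} ≤
      S.ncard + ((exposed G M) ∩
        ⋃ c ∈ {c : (G.induce Sᶜ).ConnectedComponent | Odd (compSupp G Sᶜ c).ncard},
          compSupp G Sᶜ c).ncard := by
  classical
  set odds := {c : (G.induce Sᶜ).ConnectedComponent | Odd (compSupp G Sᶜ c).ncard} with hodds
  set X := exposed G M with hX
  set U := ⋃ c ∈ odds, compSupp G Sᶜ c with hU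
  set NoExp := {c ∈ odds | ∀ v ∈ compSupp G Sᶜ c, v ∉ X} with hNoExp
  -- the matched-to-S map
  have hsig : ∀ c : (G.induce Sᶜ).ConnectedComponent, ∃ w sv : V,
      c ∈ NoExp → w ∈ compSupp G Sᶜ c ∧ sv ∈ S ∧ M.Adj w sv := by
    intro c
    by_cases h : c ∈ NoExp
    · obtain ⟨w, hw, sv, hs, hadj⟩ := odd_comp_matched_to_S hM h.1 h.2
      exact ⟨w, sv, fun _ => ⟨hw, hs, hadj⟩⟩
    · obtain ⟨v, -⟩ := compSupp_nonempty c
      exact ⟨v, v, fun hc => absurd hc h⟩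
  choose w s hws using hsig
  have hw : ∀ c ∈ NoExp, w c ∈ compSupp G Sᶜ c := fun c hc => (hws c hc).1
  have hs : ∀ c ∈ NoExp, s c ∈ S := fun c hc => (hws c hc).2.1
  have hadj : ∀ c ∈ NoExp, M.Adj (w c) (s c) := fun c hc => (hws c hc).2.2
  have hNS : NoExp.ncard ≤ S.ncard := by
    apply Set.ncard_le_ncard_of_injOn s (fun c hc => hs c hc) ?_ (Set.toFinite S)
    intro c hc c' hc' hss
    have h1 : M.Adj (s c) (w c) := (hadj c hc).symm
    have h2 : M.Adj (s c) (w c') := hss ▸ (hadj c' hc').symm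
    have hv : s c ∈ M.verts := M.edge_vert h1
    obtain ⟨y, -, hy⟩ := hM hv
    have : w c = w c' := by rw [hy _ h1, hy _ h2]
    exact compSupp_eq_of_mem (hw c hc) (this ▸ hw c' hc')
  -- the exposed map
  have hexp : ∀ c : (G.induce Sᶜ).ConnectedComponent, ∃ v : V,
      c ∈ odds \ NoExp → v ∈ compSupp G Sᶜ c ∧ v ∈ X := by
    intro c
    by_cases h : c ∈ odds \ NoExp
    · obtain ⟨hc1, hc2⟩ := h
      rw [hNoExp] at hc2
      simp only [Set.mem_setOf_eq, not_and, not_forall] at hc2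
      obtain ⟨v, hv, hvX⟩ := hc2 hc1
      exact ⟨v, fun _ => ⟨hv, not_not.mp hvX⟩⟩
    · obtain ⟨v, -⟩ := compSupp_nonempty c
      exact ⟨v, fun hc => absurd hc h⟩
  choose e hes using hexp
  have he : ∀ c ∈ odds \ NoExp, e c ∈ compSupp G Sᶜ c := fun c hc => (hes c hc).1
  have heX : ∀ c ∈ odds \ NoExp, e c ∈ X := fun c hc => (hes c hc).2
  have hES : (odds \ NoExp).ncard ≤ (X ∩ U).ncard := by
    apply Set.ncard_le_ncard_of_injOn e ?_ ?_ (Set.toFinite _)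
    · intro c hc
      refine ⟨heX c hc, ?_⟩
      rw [hU]
      exact Set.mem_biUnion hc.1 (he c hc)
    · intro c hc c' hc' hee
      exact compSupp_eq_of_mem (he c hc) (hee ▸ he c' hc')
  have hsplit : (odds \ NoExp).ncard + NoExp.ncard = odds.ncard :=
    Set.ncard_diff_add_ncard_of_subset (fun c hc => hc.1) (Set.toFinite _)
  omega

end Counting
section Lift
set_option linter.unusedSectionVars false

variable {V : Type*} [Fintype V] [DecidableEq V] {G : SimpleGraph V}

lemma lift_pm {A : Set V} (h : HasPM G A) :
    ∃ M : Subgraph G, M.IsMatching ∧ M.verts = A := by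
  obtain ⟨N, hN⟩ := h
  refine ⟨N.map (SimpleGraph.Embedding.induce A).toHom,
    hN.1.map _ Subtype.val_injective, ?_⟩
  have : N.verts = Set.univ := hN.2.verts_eq_univ
  simp [SimpleGraph.Subgraph.map, this, Set.image_univ, Subtype.range_coe]
  exact Subtype.range_coe

end Lift
section Construction
set_option linter.unusedSectionVars false
set_option maxHeartbeats 1000000

variable {V : Type*} [Fintype V] [DecidableEq V] {G : SimpleGraph V} {S : Set V}

lemma construction (hGE : GallaiEdmonds G S)
    (f : S → (G.induce Sᶜ).ConnectedComponent) (hf : Function.Injective f)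
    (hfodd : ∀ u : S, Odd (compSupp G Sᶜ (f u)).ncard)
    (g : S → V) (hg : ∀ u : S, g u ∈ compSupp G Sᶜ (f u)) (hgadj : ∀ u : S, G.Adj u (g u))
    (r : (G.induce Sᶜ).ConnectedComponent → V) (hr : ∀ c, r c ∈ compSupp G Sᶜ c) :
    ∃ M : Subgraph G, M.IsMatching ∧
      exposed G M =
        r '' {c | Odd (compSupp G Sᶜ c).ncard ∧ c ∉ Set.range f} := by
  classical
  -- the deleted vertex of each odd component
  set d : (G.induce Sᶜ).ConnectedComponent → V :=
    fun c => if h : c ∈ Set.range f then g h.choose else r c with hd_def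
  have hd : ∀ c, d c ∈ compSupp G Sᶜ c := by
    intro c
    show (if h : c ∈ Set.range f then g h.choose else r c) ∈ _
    by_cases h : c ∈ Set.range f
    · rw [dif_pos h]
      have := hg h.choose
      rw [h.choose_spec] at this
      exact this
    · rw [dif_neg h]; exact hr c
  have hdg : ∀ u : S, d (f u) = g u := by
    intro u
    have h : f u ∈ Set.range f := ⟨u, rfl⟩
    show (if h : f u ∈ Set.range f then g h.choose else r (f u)) = g u
    simp only [dif_pos h]
    congr 1
    exact hf h.choose_spec
  have hdr : ∀ c, c ∉ Set.range f → d c = r c := by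
    intro c hc
    show (if h : c ∈ Set.range f then g h.choose else r c) = r c
    rw [dif_neg hc]
  -- pieces inside components
  have hpiece : ∀ c : (G.induce Sᶜ).ConnectedComponent, ∃ P : Subgraph G, P.IsMatching ∧
      P.verts = (if Odd (compSupp G Sᶜ c).ncard
        then compSupp G Sᶜ c \ {d c} else compSupp G Sᶜ c) := by
    intro c
    by_cases hc : Odd (compSupp G Sᶜ c).ncard
    · obtain ⟨P, hP, hPv⟩ := lift_pm (hGE.2.1 c hc (d c) (hd c))
      exact ⟨P, hP, by rw [if_pos hc]; exact hPv⟩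
    · obtain ⟨P, hP, hPv⟩ := lift_pm (hGE.1 c (Nat.not_odd_iff_even.mp hc))
      exact ⟨P, hP, by rw [if_neg hc]; exact hPv⟩
  choose P hPm hPv using hpiece
  have hPsub : ∀ c, (P c).verts ⊆ compSupp G Sᶜ c := by
    intro c
    rw [hPv c]
    split_ifs
    · exact Set.diff_subset
    · exact subset_rfl
  -- the full matching
  set F : (G.induce Sᶜ).ConnectedComponent ⊕ S → Subgraph G :=
    Sum.elim P (fun u => G.subgraphOfAdj (hgadj u)) with hF_def
  have hFm : ∀ i, (F i).IsMatching := by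
    rintro (c | u)
    · exact hPm c
    · exact SimpleGraph.Subgraph.IsMatching.subgraphOfAdj (hgadj u)
  have hEverts : ∀ u : S, (F (Sum.inr u)).verts = {(u : V), g u} := by
    intro u; rfl
  have hgS : ∀ u : S, g u ∉ S := fun u => (compSupp_subset _ (hg u) : g u ∈ Sᶜ)
  have hguP : ∀ (u : S) (c), g u ∉ (P c).verts := by
    intro u c hmem
    have hmem' := hPsub c hmem
    have hcf : c = f u := compSupp_eq_of_mem hmem' (hg u)
    have hodd' : Odd (compSupp G Sᶜ c).ncard := by rw [hcf]; exact hfodd u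
    rw [hPv c, if_pos hodd'] at hmem
    exact hmem.2 (Set.mem_singleton_iff.mpr (by rw [hcf, hdg u]))
  have huP : ∀ (u : S) (c), (u : V) ∉ (P c).verts := by
    intro u c hmem
    exact (compSupp_subset _ (hPsub c hmem)) u.2
  have hdisj : Pairwise fun i j => Disjoint (F i).support (F j).support := by
    have hsupp : ∀ i, (F i).support = (F i).verts := fun i => (hFm i).support_eq_verts
    intro i j hij
    rw [hsupp i, hsupp j]
    rcases i with c | u <;> rcases j with c' | u'
    · exact Set.disjoint_of_subset (hPsub c) (hPsub c')
        (compSupp_disjoint (by simpa using hij))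
    · rw [hEverts u', Set.disjoint_right]
      rintro v (rfl | rfl)
      · exact huP u' c
      · exact hguP u' c
    · rw [hEverts u, Set.disjoint_left]
      rintro v (rfl | rfl)
      · exact huP u c'
      · exact hguP u c'
    · rw [hEverts u, hEverts u', Set.disjoint_left]
      have huu' : u ≠ u' := by simpa using hij
      rintro v (rfl | rfl) (h | h)
      · exact huu' (Subtype.val_injective h)
      · exact hgS u' (h ▸ u.2)
      · exact hgS u (h.symm ▸ u'.2)
      · have : f u = f u' := compSupp_eq_of_mem (hg u) (h ▸ hg u')
        exact huu' (hf this)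
  refine ⟨⨆ i, F i, SimpleGraph.Subgraph.IsMatching.iSup hFm hdisj, ?_⟩
  have hM : (⨆ i, F i).IsMatching := SimpleGraph.Subgraph.IsMatching.iSup hFm hdisj
  rw [exposed_eq_compl_verts hM]
  have hverts : (⨆ i, F i).verts = ⋃ i, (F i).verts := SimpleGraph.Subgraph.verts_iSup
  rw [hverts]
  ext v
  simp only [Set.mem_compl_iff, Set.mem_iUnion, not_exists]
  constructor
  · intro hv
    -- v is in no piece
    by_cases hvS : v ∈ S
    · exact absurd (by rw [hEverts ⟨v, hvS⟩]; exact Set.mem_insert _ _)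
        (hv (Sum.inr ⟨v, hvS⟩))
    · have hvSc : v ∈ Sᶜ := hvS
      set c := (G.induce Sᶜ).connectedComponentMk ⟨v, hvSc⟩ with hc_def
      have hvc : v ∈ compSupp G Sᶜ c := mem_compSupp_self v hvSc
      have hvP : v ∉ (P c).verts := hv (Sum.inl c)
      rw [hPv c] at hvP
      by_cases hcodd : Odd (compSupp G Sᶜ c).ncard
      · rw [if_pos hcodd] at hvP
        have hvd : v = d c := by
          by_contra hne
          exact hvP ⟨hvc, hne⟩
        by_cases hcr : c ∈ Set.range f
        · obtain ⟨u, hu⟩ := hcr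
          rw [← hu, hdg u] at hvd
          exact absurd (by rw [hEverts u, hvd]; exact Set.mem_insert_iff.mpr (Or.inr rfl))
            (hv (Sum.inr u))
        · exact ⟨c, ⟨hcodd, hcr⟩, by rw [← hdr c hcr, hvd]⟩
      · rw [if_neg hcodd] at hvP
        exact absurd hvc hvP
  · rintro ⟨c, ⟨hcodd, hcnr⟩, rfl⟩ i
    rcases i with c' | u
    · show r c ∉ (P c').verts
      by_cases hcc : c' = c
      · subst hcc
        rw [hPv c', if_pos hcodd]
        rintro ⟨-, hne⟩
        exact hne (Set.mem_singleton_iff.mpr (hdr c' hcnr).symm)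
      · intro hmem
        exact (compSupp_disjoint hcc).ne_of_mem (hPsub c' hmem) (hr c) rfl
    · rw [hEverts u]
      rintro (h | h)
      · have := compSupp_subset c (hr c)
        rw [h] at this
        exact this u.2
      · have hgc : g u ∈ compSupp G Sᶜ c := h ▸ hr c
        exact hcnr ⟨u, compSupp_eq_of_mem (hg u) hgc⟩

end Construction
section Hall
set_option linter.unusedSectionVars false
set_option maxHeartbeats 1000000

variable {V : Type*} [Fintype V] [DecidableEq V] {G : SimpleGraph V} {S : Set V}

lemma hall_step (hGE : GallaiEdmonds G S) (E : Set (G.induce Sᶜ).ConnectedComponent)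
    (hE : E.ncard ≤ 1) :
    ∃ f : S → (G.induce Sᶜ).ConnectedComponent, Function.Injective f ∧
      ∀ u : S, Odd (compSupp G Sᶜ (f u)).ncard ∧ f u ∉ E ∧
        ∃ w ∈ compSupp G Sᶜ (f u), G.Adj u w := by
  classical
  set t : S → Finset (G.induce Sᶜ).ConnectedComponent := fun u =>
    (Set.toFinite {c : (G.induce Sᶜ).ConnectedComponent |
      Odd (compSupp G Sᶜ c).ncard ∧ c ∉ E ∧ ∃ w ∈ compSupp G Sᶜ c, G.Adj u w}).toFinset
      with ht_def
  have hmem : ∀ (u : S) (c), c ∈ t u ↔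
      Odd (compSupp G Sᶜ c).ncard ∧ c ∉ E ∧ ∃ w ∈ compSupp G Sᶜ c, G.Adj u w := by
    intro u c
    rw [ht_def]
    exact Set.Finite.mem_toFinset _
  have hall : ∀ s : Finset S, s.card ≤ (s.biUnion t).card := by
    intro s
    rcases s.eq_empty_or_nonempty with rfl | hs
    · simp
    set T : Set V := Subtype.val '' (s : Set S) with hT_def
    have hTS : T ⊆ S := by rintro v ⟨u, -, rfl⟩; exact u.2
    have hTne : T.Nonempty := hs.to_set.image _
    have hsurp := hGE.2.2 T hTS hTne
    have hsub : minorNbhd G S T \ E ⊆ ↑(s.biUnion t) := by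
      rintro c ⟨⟨hodd, u, hu, w, hw, hadj⟩, hcE⟩
      obtain ⟨u', hu', rfl⟩ := hu
      rw [Finset.coe_biUnion, Set.mem_iUnion]
      refine ⟨u', Set.mem_iUnion.mpr ⟨hu', ?_⟩⟩
      exact hmem u' c |>.mpr ⟨hodd, hcE, w, hw, hadj⟩
    have hcard1 : (minorNbhd G S T).ncard ≤ (minorNbhd G S T \ E).ncard + E.ncard :=
      Set.ncard_le_ncard_diff_add_ncard _ _ (Set.toFinite _)
    have hcard2 : (minorNbhd G S T \ E).ncard ≤ (s.biUnion t).card := by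
      rw [← Set.ncard_coe_finset]
      exact Set.ncard_le_ncard hsub (Set.toFinite _)
    have hTcard : T.ncard = s.card := by
      rw [hT_def, Set.ncard_image_of_injective _ Subtype.val_injective,
        Set.ncard_coe_finset]
    omega
  obtain ⟨f, hfinj, hft⟩ := (Finset.all_card_le_biUnion_card_iff_exists_injective t).mp hall
  exact ⟨f, hfinj, fun u => (hmem u (f u)).mp (hft u)⟩

end Hall
section Assemble
set_option linter.unusedSectionVars false
set_option maxHeartbeats 1000000

variable {V : Type*} [Fintype V] [DecidableEq V] {G : SimpleGraph V} {S : Set V}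

lemma badset_card (f : S → (G.induce Sᶜ).ConnectedComponent) (hf : Function.Injective f)
    (hfodd : ∀ u : S, Odd (compSupp G Sᶜ (f u)).ncard)
    (r : (G.induce Sᶜ).ConnectedComponent → V) (hr : ∀ c, r c ∈ compSupp G Sᶜ c) :
    (r '' {c | Odd (compSupp G Sᶜ c).ncard ∧ c ∉ Set.range f}).ncard + S.ncard =
      oddComps G Sᶜ := by
  classical
  have hrinj : Function.Injective r := by
    intro c c' h
    exact compSupp_eq_of_mem (hr c) (h ▸ hr c')
  rw [Set.ncard_image_of_injective _ hrinj]
  have hbad : {c | Odd (compSupp G Sᶜ c).ncard ∧ c ∉ Set.range f} =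
      {c | Odd (compSupp G Sᶜ c).ncard} \ Set.range f := rfl
  have hsub : Set.range f ⊆ {c | Odd (compSupp G Sᶜ c).ncard} := by
    rintro c ⟨u, rfl⟩; exact hfodd u
  have hdiff := Set.ncard_diff_add_ncard_of_subset hsub (Set.toFinite _)
  have hrange : (Set.range f).ncard = S.ncard := by
    rw [← Set.image_univ, Set.ncard_image_of_injective _ hf, Set.ncard_univ,
      Nat.card_coe_set_eq]
  rw [hbad, ← hrange]
  rw [oddComps]
  omega

/-- a matching achieving the Gallai-Edmonds deficiency is maximum -/
lemma max_of_deficiency {M : Subgraph G} (hM : M.IsMatching)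
    (hdef : (exposed G M).ncard + S.ncard = oddComps G Sᶜ) :
    IsMaximumMatching G M := by
  refine ⟨hM, fun M' hM' => ?_⟩
  have h1 := counting_lower_bound (S := S) hM'
  have h2 : ((exposed G M') ∩
      ⋃ c ∈ {c : (G.induce Sᶜ).ConnectedComponent | Odd (compSupp G Sᶜ c).ncard},
        compSupp G Sᶜ c).ncard ≤ (exposed G M').ncard :=
    Set.ncard_le_ncard Set.inter_subset_left (Set.toFinite _)
  have h3 := two_mul_edges_add_exposed hM
  have h4 := two_mul_edges_add_exposed hM'
  have h5 : oddComps G Sᶜ =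
      Set.ncard {c : (G.induce Sᶜ).ConnectedComponent | Odd (compSupp G Sᶜ c).ncard} := rfl
  omega

/-- there is a matching achieving the deficiency -/
lemma exists_deficiency_matching (hGE : GallaiEdmonds G S) :
    ∃ M : Subgraph G, M.IsMatching ∧
      (exposed G M).ncard + S.ncard = oddComps G Sᶜ := by
  classical
  obtain ⟨f, hf, hprop⟩ := hall_step hGE ∅ (by simp)
  choose g hg hgadj using fun u : S => (hprop u).2.2
  set r : (G.induce Sᶜ).ConnectedComponent → V := fun c => (compSupp_nonempty c).choose
    with hr_def
  have hr : ∀ c, r c ∈ compSupp G Sᶜ c := fun c => (compSupp_nonempty c).choose_spec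
  obtain ⟨M, hMm, hMexp⟩ := construction hGE f hf (fun u => (hprop u).1) g hg hgadj r hr
  exact ⟨M, hMm, hMexp ▸ badset_card f hf (fun u => (hprop u).1) r hr⟩

lemma maximum_exposed (hGE : GallaiEdmonds G S) {M : Subgraph G}
    (hM : IsMaximumMatching G M) :
    (exposed G M).ncard + S.ncard = oddComps G Sᶜ ∧
      exposed G M ⊆ ⋃ c ∈ {c : (G.induce Sᶜ).ConnectedComponent |
        Odd (compSupp G Sᶜ c).ncard}, compSupp G Sᶜ c := by
  classical
  obtain ⟨M₀, hM₀m, hM₀def⟩ := exists_deficiency_matching hGE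
  have hM₀max := max_of_deficiency hM₀m hM₀def
  have he1 : M₀.edgeSet.ncard ≤ M.edgeSet.ncard := hM.2 M₀ hM₀m
  have he2 : M.edgeSet.ncard ≤ M₀.edgeSet.ncard := hM₀max.2 M hM.1
  have h3 := two_mul_edges_add_exposed hM.1
  have h4 := two_mul_edges_add_exposed hM₀m
  have hdef : (exposed G M).ncard + S.ncard = oddComps G Sᶜ := by omega
  refine ⟨hdef, ?_⟩
  have h1 := counting_lower_bound (S := S) hM.1
  have h5 : oddComps G Sᶜ =
      Set.ncard {c : (G.induce Sᶜ).ConnectedComponent | Odd (compSupp G Sᶜ c).ncard} := rfl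
  have hle : (exposed G M).ncard ≤ ((exposed G M) ∩
      ⋃ c ∈ {c : (G.induce Sᶜ).ConnectedComponent | Odd (compSupp G Sᶜ c).ncard},
        compSupp G Sᶜ c).ncard := by omega
  have := Set.eq_of_subset_of_ncard_le Set.inter_subset_left hle (Set.toFinite _)
  rw [← Set.inter_eq_left]
  exact this.symm ▸ this

end Assemble
section Final
set_option linter.unusedSectionVars false
set_option maxHeartbeats 1000000

variable {V : Type*} [Fintype V] [DecidableEq V] {G : SimpleGraph V} {S : Set V}

lemma D_eq_odd_union (hGE : GallaiEdmonds G S) :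
    {v : V | ∃ M : Subgraph G, IsMaximumMatching G M ∧ v ∈ exposed G M} =
      ⋃ c ∈ {c : (G.induce Sᶜ).ConnectedComponent | Odd (compSupp G Sᶜ c).ncard},
        compSupp G Sᶜ c := by
  classical
  apply Set.Subset.antisymm
  · rintro v ⟨M, hMmax, hvexp⟩
    exact (maximum_exposed hGE hMmax).2 hvexp
  · intro v hv
    obtain ⟨c₀, hc₀odd, hvc₀⟩ := by simpa using hv
    obtain ⟨f, hf, hprop⟩ := hall_step hGE {c₀} (by simp)
    choose g hg hgadj using fun u : S => (hprop u).2.2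
    set r : (G.induce Sᶜ).ConnectedComponent → V :=
      fun c => if c = c₀ then v else (compSupp_nonempty c).choose with hr_def
    have hr : ∀ c, r c ∈ compSupp G Sᶜ c := by
      intro c
      simp only [hr_def]
      by_cases h : c = c₀
      · rw [if_pos h, h]; exact hvc₀
      · rw [if_neg h]; exact (compSupp_nonempty c).choose_spec
    obtain ⟨M, hMm, hMexp⟩ := construction hGE f hf (fun u => (hprop u).1) g hg hgadj r hr
    have hMmax : IsMaximumMatching G M :=
      max_of_deficiency hMm (hMexp ▸ badset_card f hf (fun u => (hprop u).1) r hr)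
    refine ⟨M, hMmax, ?_⟩
    rw [hMexp]
    have hc₀nr : c₀ ∉ Set.range f := by
      rintro ⟨u, hu⟩
      exact (hprop u).2.1 (hu ▸ rfl)
    exact ⟨c₀, ⟨hc₀odd, hc₀nr⟩, by simp only [hr_def]; simp⟩

lemma GE_char (hGE : GallaiEdmonds G S) :
    S = {u : V | u ∉ {v : V | ∃ M : Subgraph G, IsMaximumMatching G M ∧ v ∈ exposed G M} ∧
      ∃ w ∈ {v : V | ∃ M : Subgraph G, IsMaximumMatching G M ∧ v ∈ exposed G M}, G.Adj u w} := by
  classical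
  rw [D_eq_odd_union hGE]
  set U := ⋃ c ∈ {c : (G.induce Sᶜ).ConnectedComponent | Odd (compSupp G Sᶜ c).ncard},
    compSupp G Sᶜ c with hU_def
  have hUS : U ⊆ Sᶜ := by
    rw [hU_def]
    rintro v hv
    obtain ⟨c, -, hvc⟩ := by simpa using hv
    exact compSupp_subset c hvc
  ext u
  constructor
  · intro hu
    refine ⟨fun hmem => hUS hmem hu, ?_⟩
    have hsurp := hGE.2.2 {u} (Set.singleton_subset_iff.mpr hu) ⟨u, rfl⟩
    rw [Set.ncard_singleton] at hsurp
    have hne : (minorNbhd G S {u}).Nonempty :=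
      Set.nonempty_of_ncard_ne_zero (by omega)
    obtain ⟨c, hcodd, u', hu', w, hw, hadj⟩ := hne
    rw [Set.mem_singleton_iff] at hu'
    subst hu'
    refine ⟨w, ?_, hadj⟩
    rw [hU_def]
    exact Set.mem_biUnion hcodd hw
  · rintro ⟨huD, w, hwD, hadj⟩
    by_contra h
    rw [hU_def] at hwD
    obtain ⟨c, hcodd, hwc⟩ := by simpa using hwD
    have huc : u ∈ compSupp G Sᶜ c := mem_compSupp_of_adj hwc h hadj.symm
    exact huD (by rw [hU_def]; exact Set.mem_biUnion hcodd huc)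

end Final

/-- A Gallai-Edmonds set is the neighborhood of `D(G)` outside `D(G)`;
consequently it is unique. -/
theorem stmt_11 (G : SimpleGraph V) (S : Set V) (h : GallaiEdmonds G S)
    (D : Set V)
    (hD : D = {v : V | ∃ M : Subgraph G, IsMaximumMatching G M ∧ v ∈ exposed G M}) :
    S = {u : V | u ∉ D ∧ ∃ w ∈ D, G.Adj u w} ∧
    ∀ S' : Set V, GallaiEdmonds G S' → S' = S := by
  subst hD
  exact ⟨GE_char h, fun S' h' => (GE_char h').trans (GE_char h).symm⟩
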